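/- In a J-category, the abstract topological complexity TC(B), defined as secat of the diagonal Δ_F : F → F × F for any F-factorization B →~ F ↠ 0, is well-defined: it does not depend on the choice of e-fibrant replacement F, and it is invariant under weak equivalence of objects, i.e. if B and B' are weakly equivalent then TC(B) = TC(B'). -/

import Mathlib

open CategoryTheory CategoryTheory.Limits ZeroObject

universe v u v' u'

variable (C : Type u) [Category.{v} C] [HasZeroObject C] [HasZeroMorphisms C]

/-- A category satisfying axioms (J1)-(J4) of Doeraene's J-categories:
a pointed category with fibrations, cofibrations and weak equivalences. -/
structure PreJCat where
  fib : MorphismProperty C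
  cofib : MorphismProperty C
  weq : MorphismProperty C
  /-- (J1) isomorphisms are trivial cofibrations -/
  iso_triv_cofib : ∀ {X Y : C} (f : X ⟶ Y), IsIso f → cofib f ∧ weq f
  /-- (J1) isomorphisms are trivial fibrations -/
  iso_triv_fib : ∀ {X Y : C} (f : X ⟶ Y), IsIso f → fib f ∧ weq f
  fib_comp : ∀ {X Y Z : C} {f : X ⟶ Y} {g : Y ⟶ Z}, fib f → fib g → fib (f ≫ g)
  cofib_comp : ∀ {X Y Z : C} {f : X ⟶ Y} {g : Y ⟶ Z}, cofib f → cofib g → cofib (f ≫ g)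
  /-- (J1) two-out-of-three for weak equivalences -/
  weq_comp : ∀ {X Y Z : C} {f : X ⟶ Y} {g : Y ⟶ Z}, weq f → weq g → weq (f ≫ g)
  weq_of_comp_left : ∀ {X Y Z : C} {f : X ⟶ Y} {g : Y ⟶ Z}, weq g → weq (f ≫ g) → weq f
  weq_of_comp_right : ∀ {X Y Z : C} {f : X ⟶ Y} {g : Y ⟶ Z}, weq f → weq (f ≫ g) → weq g
  /-- (J2) pullbacks of fibrations exist, and the base extension is a fibration -/
  pb_exists : ∀ {E B B' : C} (p : E ⟶ B) (f : B' ⟶ B), fib p →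
    ∃ (P : C) (fb : P ⟶ E) (pb : P ⟶ B'), IsPullback fb pb p f ∧ fib pb
  /-- (J2) base extensions of weak equivalences along fibrations are weak equivalences -/
  pb_weq : ∀ {E B B' P : C} {p : E ⟶ B} {f : B' ⟶ B} {fb : P ⟶ E} {pb : P ⟶ B'},
    fib p → IsPullback fb pb p f → (weq f → weq fb) ∧ (weq p → weq pb)
  /-- (J2) dual: pushouts of cofibrations exist -/
  po_exists : ∀ {A X Y : C} (i : A ⟶ X) (g : A ⟶ Y), cofib i →
    ∃ (Q : C) (inl : X ⟶ Q) (inr : Y ⟶ Q), IsPushout i g inl inr ∧ cofib inr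
  po_weq : ∀ {A X Y Q : C} {i : A ⟶ X} {g : A ⟶ Y} {inl : X ⟶ Q} {inr : Y ⟶ Q},
    cofib i → IsPushout i g inl inr → (weq g → weq inl) ∧ (weq i → weq inr)
  /-- (J3) F-factorizations exist -/
  F_fac : ∀ {X Y : C} (f : X ⟶ Y), ∃ (Z : C) (τ : X ⟶ Z) (q : Z ⟶ Y),
    weq τ ∧ fib q ∧ τ ≫ q = f
  /-- (J3) C-factorizations exist -/
  C_fac : ∀ {X Y : C} (f : X ⟶ Y), ∃ (Z : C) (i : X ⟶ Z) (σ : Z ⟶ Y),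
    cofib i ∧ weq σ ∧ i ≫ σ = f
  /-- (J4) cofibrant replacements exist -/
  cof_replace : ∀ X : C, ∃ (Xb : C) (q : Xb ⟶ X), fib q ∧ weq q ∧
    (∀ {E : C} (p : E ⟶ Xb), fib p → weq p → ∃ s : Xb ⟶ E, s ≫ p = 𝟙 Xb)

variable {C}

namespace PreJCat

/-- An object is a cofibrant model if every trivial fibration onto it admits a section. -/
def CofModel (P : PreJCat C) (X : C) : Prop :=
  ∀ {E : C} (p : E ⟶ X), P.fib p → P.weq p → ∃ s : X ⟶ E, s ≫ p = 𝟙 X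

/-- An object is e-fibrant if the morphism to the zero object is a fibration. -/
def EFibrant (P : PreJCat C) (X : C) : Prop := P.fib (0 : X ⟶ 0)

/-- `f` admits a weak lifting along `g` (all objects being cofibrant models). -/
def WeakLifting (P : PreJCat C) {A B Cc : C} (f : A ⟶ B) (g : Cc ⟶ B) : Prop :=
  ∃ (E : C) (τ : Cc ⟶ E) (q : E ⟶ B), P.weq τ ∧ P.fib q ∧ τ ≫ q = g ∧
    ∃ s : A ⟶ E, s ≫ q = f

/-- `g` admits a weak section. -/
def HasWeakSection (P : PreJCat C) {E B : C} (g : E ⟶ B) : Prop :=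
  P.WeakLifting (𝟙 B) g

/-- `j : J ⟶ B` is a join morphism of `f : A ⟶ B` and `g : Cc ⟶ B`: built from an
F-factorization of `g`, a pullback, a C-factorization and a pushout. -/
def IsJoin (P : PreJCat C) {A Cc B J : C} (f : A ⟶ B) (g : Cc ⟶ B) (j : J ⟶ B) : Prop :=
  ∃ (E : C) (τ : Cc ⟶ E) (q : E ⟶ B), P.weq τ ∧ P.fib q ∧ τ ≫ q = g ∧
  ∃ (E' Z : C) (fbar : E' ⟶ E) (pbar : E' ⟶ A) (i : E' ⟶ Z) (σ : Z ⟶ E)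
    (a : A ⟶ J) (bz : Z ⟶ J),
    IsPullback fbar pbar q f ∧ P.cofib i ∧ P.weq σ ∧ i ≫ σ = fbar ∧
    IsPushout pbar i a bz ∧ a ≫ j = f ∧ bz ≫ j = σ ≫ q

/-- `IsIterJoin P p n h` : `h` is an `n`-th iterated join morphism `*ⁿ_B E ⟶ B` of `p`. -/
inductive IsIterJoin (P : PreJCat C) {E B : C} (p : E ⟶ B) : ℕ → ∀ {X : C}, (X ⟶ B) → Prop
  | zero : IsIterJoin P p 0 p
  | succ {n : ℕ} {X Y : C} {h : X ⟶ B} {h' : Y ⟶ B} :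
      IsIterJoin P p n h → P.IsJoin h p h' → IsIterJoin P p (n + 1) h'

/-- The Ganea-type sectional category of a morphism. -/
noncomputable def Gsecat (P : PreJCat C) {E B : C} (p : E ⟶ B) : ℕ∞ :=
  sInf {n : ℕ∞ | ∃ m : ℕ, n = (m : ℕ∞) ∧
    ∃ (X : C) (h : X ⟶ B), P.IsIterJoin p m h ∧ P.HasWeakSection h}

end PreJCat

/-- `p1, p2` exhibit `Pd` as a binary product of `X` and `Y`. -/
def IsBinProd {X Y Pd : C} (p1 : Pd ⟶ X) (p2 : Pd ⟶ Y) : Prop :=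
  Nonempty (IsLimit (BinaryFan.mk p1 p2))

namespace PreJCat

/-- `IsFatWedge P p n j Δ` : `j : Tⁿ(p) ⟶ B^{n+1}` is an `n`-th fat wedge morphism of `p`
together with the diagonal `Δ : B ⟶ B^{n+1}`. -/
inductive IsFatWedge (P : PreJCat C) {E B : C} (p : E ⟶ B) :
    ℕ → ∀ {T Pw : C}, (T ⟶ Pw) → (B ⟶ Pw) → Prop
  | zero : IsFatWedge P p 0 p (𝟙 B)
  | succ {n : ℕ} {T Pn : C} {j : T ⟶ Pn} {Δ : B ⟶ Pn}
      (hprev : IsFatWedge P p n j Δ)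
      {Pn1 : C} {pr1 : Pn1 ⟶ Pn} {pr2 : Pn1 ⟶ B} (hP : IsBinProd pr1 pr2)
      {TB : C} {q1 : TB ⟶ T} {q2 : TB ⟶ B} (hTB : IsBinProd q1 q2)
      {PE : C} {r1 : PE ⟶ Pn} {r2 : PE ⟶ E} (hPE : IsBinProd r1 r2)
      {jB : TB ⟶ Pn1} (hjB : jB ≫ pr1 = q1 ≫ j ∧ jB ≫ pr2 = q2)
      {pP : PE ⟶ Pn1} (hpP : pP ≫ pr1 = r1 ∧ pP ≫ pr2 = r2 ≫ p)
      {Tn1 : C} {j' : Tn1 ⟶ Pn1} (hjoin : P.IsJoin jB pP j')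
      {Δ' : B ⟶ Pn1} (hΔ : Δ' ≫ pr1 = Δ ∧ Δ' ≫ pr2 = 𝟙 B) :
      IsFatWedge P p (n + 1) j' Δ'

/-- The Whitehead-type sectional category of a morphism with e-fibrant codomain. -/
noncomputable def WsecatE (P : PreJCat C) {E B : C} (p : E ⟶ B) : ℕ∞ :=
  sInf {n : ℕ∞ | ∃ m : ℕ, n = (m : ℕ∞) ∧
    ∃ (T Pw : C) (j : T ⟶ Pw) (Δ : B ⟶ Pw), P.IsFatWedge p m j Δ ∧ P.WeakLifting Δ j}

/-- The Whitehead-type sectional category of an arbitrary morphism, via e-fibrant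
replacements of the codomain. -/
noncomputable def Wsecat (P : PreJCat C) {E B : C} (p : E ⟶ B) : ℕ∞ :=
  ⨅ (F : C) (τ : B ⟶ F) (_ : P.weq τ ∧ P.EFibrant F), P.WsecatE (p ≫ τ)

/-- A commutative square is a homotopy pullback. -/
def IsHPB (P : PreJCat C) {D A Cc B : C} (f' : D ⟶ Cc) (g' : D ⟶ A)
    (g : Cc ⟶ B) (f : A ⟶ B) : Prop :=
  f' ≫ g = g' ≫ f ∧ ∃ (E : C) (τ : Cc ⟶ E) (q : E ⟶ B), P.weq τ ∧ P.fib q ∧ τ ≫ q = g ∧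
    ∃ (Pt : C) (pr1 : Pt ⟶ E) (pr2 : Pt ⟶ A), IsPullback pr1 pr2 q f ∧
      ∃ w : D ⟶ Pt, P.weq w ∧ w ≫ pr1 = f' ≫ τ ∧ w ≫ pr2 = g'

/-- A commutative square is a homotopy pushout. -/
def IsHPO (P : PreJCat C) {A B Cc D : C} (f : A ⟶ B) (g : A ⟶ Cc)
    (i' : B ⟶ D) (j' : Cc ⟶ D) : Prop :=
  f ≫ i' = g ≫ j' ∧ ∃ (Z : C) (i : A ⟶ Z) (σ : Z ⟶ B), P.cofib i ∧ P.weq σ ∧ i ≫ σ = f ∧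
    ∃ (Q : C) (inl : Z ⟶ Q) (inr : Cc ⟶ Q), IsPushout i g inl inr ∧
      ∃ w : Q ⟶ D, P.weq w ∧ inl ≫ w = σ ≫ i' ∧ inr ≫ w = j'

/-- `A-A'-B'-B` is a weak pullback over `b : B ⟶ B'` (all objects cofibrant models). -/
def IsWeakPullback (P : PreJCat C) {A B A' B' : C}
    (f : A ⟶ B) (f' : A' ⟶ B') (b : B ⟶ B') : Prop :=
  ∃ (X : C) (τ : A' ⟶ X) (q : X ⟶ B'), P.weq τ ∧ P.fib q ∧ τ ≫ q = f' ∧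
    ∃ x : A ⟶ X, P.IsHPB x f q b

/-- `g : G ⟶ B` is an `n`-th Ganea map of `B`: the `n`-th iterated join of `0 ⟶ B`. -/
def IsGaneaMap (P : PreJCat C) (B : C) (n : ℕ) {G : C} (g : G ⟶ B) : Prop :=
  P.IsIterJoin (0 : (0 : C) ⟶ B) n g

/-- The Lusternik-Schnirelmann category of an object. -/
noncomputable def catObj (P : PreJCat C) (B : C) : ℕ∞ :=
  sInf {n : ℕ∞ | ∃ m : ℕ, n = (m : ℕ∞) ∧
    ∃ (G : C) (g : G ⟶ B), P.IsGaneaMap B m g ∧ P.HasWeakSection g}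

/-- The Lusternik-Schnirelmann category of a morphism `b : B ⟶ B'`:
least `n` such that `b` admits a weak lifting along the `n`-th Ganea map of `B'`. -/
noncomputable def catMor (P : PreJCat C) {B B' : C} (b : B ⟶ B') : ℕ∞ :=
  sInf {n : ℕ∞ | ∃ m : ℕ, n = (m : ℕ∞) ∧
    ∃ (G : C) (g : G ⟶ B'), P.IsGaneaMap B' m g ∧ P.WeakLifting b g}

/-- One step of a zigzag: a weak equivalence of morphisms in the arrow category. -/
def MorWeqStep (P : PreJCat C) (u v : Arrow C) : Prop :=
  ∃ h : u ⟶ v, P.weq h.left ∧ P.weq h.right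

/-- Two morphisms are weakly equivalent: joined by a finite zigzag of weak
equivalences of morphisms. -/
def WeaklyEquivMor (P : PreJCat C) (u v : Arrow C) : Prop :=
  Relation.EqvGen P.MorWeqStep u v

def ObjWeqStep (P : PreJCat C) (X Y : C) : Prop := ∃ f : X ⟶ Y, P.weq f

/-- Two objects are weakly equivalent: joined by a finite zigzag of weak equivalences. -/
def WeaklyEquivObj (P : PreJCat C) (X Y : C) : Prop :=
  Relation.EqvGen P.ObjWeqStep X Y

/-- The abstract topological complexity of an e-fibrant object:
the sectional category of the diagonal `B ⟶ B × B`. -/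
noncomputable def TCE (P : PreJCat C) (B : C) : ℕ∞ :=
  ⨅ (Pd : C) (p1 : Pd ⟶ B) (p2 : Pd ⟶ B) (_ : IsBinProd p1 p2)
    (Δ : B ⟶ Pd) (_ : Δ ≫ p1 = 𝟙 B ∧ Δ ≫ p2 = 𝟙 B), P.Gsecat Δ

/-- The abstract topological complexity of an arbitrary object, via e-fibrant
replacements. -/
noncomputable def TC (P : PreJCat C) (B : C) : ℕ∞ :=
  ⨅ (F : C) (τ : B ⟶ F) (_ : P.weq τ ∧ P.EFibrant F), P.TCE F

end PreJCat

variable (C)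

/-- A J-category: (J1)-(J4) together with the cube axiom (J5). -/
structure JCat extends PreJCat C where
  /-- (J5) the cube axiom: in a commutative cube whose bottom face is a homotopy
  pushout and whose vertical faces are homotopy pullbacks, the top face is a
  homotopy pushout. -/
  cube : ∀ {X00 X01 X10 X11 Y00 Y01 Y10 Y11 : C}
    {tf : X00 ⟶ X01} {tg : X00 ⟶ X10} {ti : X01 ⟶ X11} {tj : X10 ⟶ X11}
    {bf : Y00 ⟶ Y01} {bg : Y00 ⟶ Y10} {bi : Y01 ⟶ Y11} {bj : Y10 ⟶ Y11}
    {v00 : X00 ⟶ Y00} {v01 : X01 ⟶ Y01} {v10 : X10 ⟶ Y10} {v11 : X11 ⟶ Y11},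
    tf ≫ ti = tg ≫ tj →
    toPreJCat.IsHPO bf bg bi bj →
    toPreJCat.IsHPB tf v00 v01 bf →
    toPreJCat.IsHPB tg v00 v10 bg →
    toPreJCat.IsHPB ti v01 v11 bi →
    toPreJCat.IsHPB tj v10 v11 bj →
    toPreJCat.IsHPO tf tg ti tj

variable {C}

/-- A modelization functor: preserves weak equivalences, homotopy pullbacks and
homotopy pushouts. -/
structure ModelizationFunctor {D : Type u'} [Category.{v'} D] [HasZeroObject D]
    [HasZeroMorphisms D] (P : PreJCat C) (Q : PreJCat D) where
  F : C ⥤ D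
  map_weq : ∀ {X Y : C} (f : X ⟶ Y), P.weq f → Q.weq (F.map f)
  map_hpb : ∀ {Dd A Cc B : C} {f' : Dd ⟶ Cc} {g' : Dd ⟶ A} {g : Cc ⟶ B} {f : A ⟶ B},
    P.IsHPB f' g' g f → Q.IsHPB (F.map f') (F.map g') (F.map g) (F.map f)
  map_hpo : ∀ {A B Cc Dd : C} {f : A ⟶ B} {g : A ⟶ Cc} {i' : B ⟶ Dd} {j' : Cc ⟶ Dd},
    P.IsHPO f g i' j' → Q.IsHPO (F.map f) (F.map g) (F.map i') (F.map j')

/-! ### Auxiliary lemmas for the well-definedness of TC -/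

namespace PreJCat

lemma weq_of_isIso (P : PreJCat C) {X Y : C} (f : X ⟶ Y) [IsIso f] : P.weq f :=
  (P.iso_triv_fib f inferInstance).2

lemma weq_id' (P : PreJCat C) (X : C) : P.weq (𝟙 X) :=
  P.weq_of_isIso _

lemma fib_of_isPullback (P : PreJCat C) {E B B' Q : C} {p : E ⟶ B} {f : B' ⟶ B}
    {fb : Q ⟶ E} {pb : Q ⟶ B'} (hp : P.fib p) (h : IsPullback fb pb p f) : P.fib pb := by
  obtain ⟨Q₂, fb₂, pb₂, h₂, hf₂⟩ := P.pb_exists p f hp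
  rw [← h₂.isoIsPullback_inv_snd _ _ h]
  exact P.fib_comp (P.iso_triv_fib _ inferInstance).1 hf₂

lemma cofib_of_isPushout (P : PreJCat C) {A X Y Q : C} {i : A ⟶ X} {g : A ⟶ Y}
    {inl : X ⟶ Q} {inr : Y ⟶ Q} (hi : P.cofib i) (h : IsPushout i g inl inr) :
    P.cofib inr := by
  obtain ⟨Q₂, inl₂, inr₂, h₂, hc₂⟩ := P.po_exists i g hi
  rw [← h₂.inr_isoIsPushout_hom _ _ h]
  exact P.cofib_comp hc₂ (P.iso_triv_cofib _ inferInstance).1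

lemma hasWeakSection_def (P : PreJCat C) {E B : C} (g : E ⟶ B) :
    P.HasWeakSection g ↔ ∃ (E' : C) (τ : E ⟶ E') (q : E' ⟶ B), P.weq τ ∧ P.fib q ∧
      τ ≫ q = g ∧ ∃ s : B ⟶ E', s ≫ q = 𝟙 B := Iff.rfl

/-- Sections of fibrant replacements can be transferred between any two
F-factorizations of the same morphism. -/
lemma section_transfer (P : PreJCat C) (hc : ∀ X : C, P.CofModel X)
    {X B E₁ E₂ : C} {τ₁ : X ⟶ E₁} {q₁ : E₁ ⟶ B} {τ₂ : X ⟶ E₂} {q₂ : E₂ ⟶ B}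
    (hτ₁ : P.weq τ₁) (hq₁ : P.fib q₁) (hτ₂ : P.weq τ₂) (hq₂ : P.fib q₂)
    (hfac : τ₁ ≫ q₁ = τ₂ ≫ q₂) {s₁ : B ⟶ E₁} (hs₁ : s₁ ≫ q₁ = 𝟙 B) :
    ∃ s₂ : B ⟶ E₂, s₂ ≫ q₂ = 𝟙 B := by
  obtain ⟨W, wfb, wpb, hW, hWfib⟩ := P.pb_exists q₂ q₁ hq₂
  obtain ⟨N, wt, rt, hwt, hrt, hwtq⟩ := P.F_fac (hW.lift τ₂ τ₁ hfac.symm)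
  have h1 : P.fib (rt ≫ wpb) := P.fib_comp hrt hWfib
  have h2 : P.weq (rt ≫ wpb) := by
    apply P.weq_of_comp_right hwt
    rw [← Category.assoc, hwtq, hW.lift_snd]
    exact hτ₁
  obtain ⟨sN, hsN⟩ := hc E₁ (rt ≫ wpb) h1 h2
  refine ⟨s₁ ≫ sN ≫ rt ≫ wfb, ?_⟩
  calc (s₁ ≫ sN ≫ rt ≫ wfb) ≫ q₂ = s₁ ≫ sN ≫ rt ≫ wfb ≫ q₂ := by
        simp only [Category.assoc]
    _ = s₁ ≫ sN ≫ rt ≫ wpb ≫ q₁ := by rw [hW.w]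
    _ = s₁ ≫ (sN ≫ rt ≫ wpb) ≫ q₁ := by simp only [Category.assoc]
    _ = 𝟙 B := by rw [hsN, Category.id_comp, hs₁]

/-- A weak section of `j` yields a weak section of `d` if `j = z ≫ d` for a
weak equivalence `z`. -/
lemma hasWeakSection_of_comp (P : PreJCat C) (hc : ∀ X : C, P.CofModel X)
    {X Y B : C} {z : X ⟶ Y} {d : Y ⟶ B} {j : X ⟶ B} (hz : P.weq z) (hzd : z ≫ d = j)
    (hj : P.HasWeakSection j) : P.HasWeakSection d := by
  rw [P.hasWeakSection_def] at hj
  obtain ⟨E, τ, q, hτ, hq, hfac, s, hs⟩ := hj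
  obtain ⟨E₂, τ₂, q₂, hτ₂, hq₂, hfac₂⟩ := P.F_fac d
  obtain ⟨s₂, hs₂⟩ := P.section_transfer hc hτ hq (P.weq_comp hz hτ₂) hq₂
    (by rw [hfac, Category.assoc, hfac₂, hzd]) hs
  rw [P.hasWeakSection_def]
  exact ⟨E₂, τ₂, q₂, hτ₂, hq₂, hfac₂, s₂, hs₂⟩

/-- Weak sections can be pulled back along a weak equivalence of morphisms. -/
lemma hasWeakSection_of_square (P : PreJCat C) {X X' B B' : C}
    {x : X' ⟶ X} {H : B' ⟶ B} {j : X ⟶ B} {j' : X' ⟶ B'}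
    (hx : P.weq x) (hH : P.weq H) (hsq : x ≫ j = j' ≫ H)
    (hj : P.HasWeakSection j) : P.HasWeakSection j' := by
  rw [P.hasWeakSection_def] at hj
  obtain ⟨E, τ, q, hτ, hq, hfac, s, hs⟩ := hj
  obtain ⟨Pt, ptE, ptB, hPt, hptB⟩ := P.pb_exists q H hq
  have hptE : P.weq ptE := (P.pb_weq hq hPt).1 hH
  rw [P.hasWeakSection_def]
  refine ⟨Pt, hPt.lift (x ≫ τ) j' (by rw [Category.assoc, hfac, hsq]), ptB, ?_, hptB,
    hPt.lift_snd _ _ _,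
    hPt.lift (H ≫ s) (𝟙 B') (by rw [Category.assoc, hs, Category.comp_id, Category.id_comp]),
    hPt.lift_snd _ _ _⟩
  exact P.weq_of_comp_left hptE (by rw [hPt.lift_fst]; exact P.weq_comp hx hτ)

/-- A commutative square whose two parallel transversal sides are weak
equivalences is a homotopy pullback. -/
lemma isHPB_of_weq (P : PreJCat C) {D A Cc B : C} (f' : D ⟶ Cc) (g' : D ⟶ A)
    (g : Cc ⟶ B) (f : A ⟶ B) (hsq : f' ≫ g = g' ≫ f) (hg' : P.weq g') (hg : P.weq g) :
    P.IsHPB f' g' g f := by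
  obtain ⟨E, τ, q, hτ, hq, hfac⟩ := P.F_fac g
  have hqw : P.weq q := P.weq_of_comp_right hτ (by rw [hfac]; exact hg)
  obtain ⟨Pt, k1, k2, hPt, hk2⟩ := P.pb_exists q f hq
  have hk2w : P.weq k2 := (P.pb_weq hq hPt).2 hqw
  refine ⟨hsq, E, τ, q, hτ, hq, hfac, Pt, k1, k2, hPt,
    hPt.lift (f' ≫ τ) g' (by rw [Category.assoc, hfac, hsq]), ?_,
    hPt.lift_fst _ _ _, hPt.lift_snd _ _ _⟩
  exact P.weq_of_comp_left hk2w (by rw [hPt.lift_snd]; exact hg')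

/-- Comparison of a strict pushout of a C-factorization with a strict pushout
of the original span (with a cofibration in the second leg). -/
lemma pushout_compare (P : PreJCat C) {A B Cc D Z₀ Q : C}
    {f : A ⟶ B} {g : A ⟶ Cc} {inl : B ⟶ D} {inr : Cc ⟶ D}
    (hD : IsPushout f g inl inr) (hg : P.cofib g)
    {i₀ : A ⟶ Z₀} {σ₀ : Z₀ ⟶ B} (hi₀ : P.cofib i₀) (hσ₀ : P.weq σ₀) (hfac : i₀ ≫ σ₀ = f)
    {inlQ : Z₀ ⟶ Q} {inrQ : Cc ⟶ Q} (hQ : IsPushout i₀ g inlQ inrQ) :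
    ∃ w : Q ⟶ D, P.weq w ∧ inlQ ≫ w = σ₀ ≫ inl ∧ inrQ ≫ w = inr := by
  have hw : i₀ ≫ σ₀ ≫ inl = g ≫ inr := by rw [← Category.assoc, hfac, hD.w]
  refine ⟨hQ.desc (σ₀ ≫ inl) inr hw, ?_, hQ.inl_desc _ _ _, hQ.inr_desc _ _ _⟩
  have hbig : IsPushout (i₀ ≫ σ₀) g inl (inrQ ≫ hQ.desc (σ₀ ≫ inl) inr hw) := by
    rw [hfac, hQ.inr_desc]; exact hD
  have hright : IsPushout σ₀ inlQ inl (hQ.desc (σ₀ ≫ inl) inr hw) :=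
    IsPushout.of_left hbig (hQ.inl_desc _ _ _).symm hQ
  have hcofib_inlQ : P.cofib inlQ := P.cofib_of_isPushout hg hQ.flip
  exact (P.po_weq hcofib_inlQ hright.flip).1 hσ₀

/-- A strict pushout along a cofibration (in the second leg) is a homotopy
pushout. -/
lemma isHPO_of_pushout (P : PreJCat C) {A B Cc D : C} {f : A ⟶ B} {g : A ⟶ Cc}
    {inl : B ⟶ D} {inr : Cc ⟶ D} (hD : IsPushout f g inl inr) (hg : P.cofib g) :
    P.IsHPO f g inl inr := by
  obtain ⟨Z₀, i₀, σ₀, hi₀, hσ₀, hfac⟩ := P.C_fac f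
  obtain ⟨Q, inlQ, inrQ, hQ, _⟩ := P.po_exists i₀ g hi₀
  obtain ⟨w, hw1, h1, h2⟩ := P.pushout_compare hD hg hi₀ hσ₀ hfac hQ
  exact ⟨hD.w, Z₀, i₀, σ₀, hi₀, hσ₀, hfac, Q, inlQ, inrQ, hQ, w, hw1, h1, h2⟩

lemma isBinProd_of_isPullback_zero {X Y Q : C} {p1 : Q ⟶ X} {p2 : Q ⟶ Y}
    (h : IsPullback p1 p2 (0 : X ⟶ 0) (0 : Y ⟶ 0)) : IsBinProd p1 p2 := by
  refine ⟨BinaryFan.isLimitMk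
    (fun s => h.lift s.fst s.snd ((Limits.isZero_zero C).eq_of_tgt _ _))
    (fun s => h.lift_fst _ _ _) (fun s => h.lift_snd _ _ _) ?_⟩
  intro s m h1 h2
  apply h.hom_ext
  · exact h1.trans (h.lift_fst _ _ _).symm
  · exact h2.trans (h.lift_snd _ _ _).symm

end PreJCat

namespace JCat

/-- Gluing lemma: a weak equivalence between spans (with cofibrations in their
second legs) induces a weak equivalence between their pushouts. -/
lemma glue (J : JCat C) {A B Cc D A' B' Cc' D' : C}
    {f : A ⟶ B} {g : A ⟶ Cc} {inl : B ⟶ D} {inr : Cc ⟶ D}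
    (hD : IsPushout f g inl inr) (hg : J.toPreJCat.cofib g)
    {f' : A' ⟶ B'} {g' : A' ⟶ Cc'} {inl' : B' ⟶ D'} {inr' : Cc' ⟶ D'}
    (hD' : IsPushout f' g' inl' inr') (hg' : J.toPreJCat.cofib g')
    {α : A' ⟶ A} {β : B' ⟶ B} {γ : Cc' ⟶ Cc}
    (hα : J.toPreJCat.weq α) (hβ : J.toPreJCat.weq β) (hγ : J.toPreJCat.weq γ)
    (sq1 : f' ≫ β = α ≫ f) (sq2 : g' ≫ γ = α ≫ g) :
    ∃ δ : D' ⟶ D, J.toPreJCat.weq δ ∧ inl' ≫ δ = β ≫ inl ∧ inr' ≫ δ = γ ≫ inr := by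
  have hcomm : f' ≫ β ≫ inl = g' ≫ γ ≫ inr := by
    calc f' ≫ β ≫ inl = (f' ≫ β) ≫ inl := by rw [Category.assoc]
      _ = α ≫ f ≫ inl := by rw [sq1, Category.assoc]
      _ = α ≫ g ≫ inr := by rw [hD.w]
      _ = (α ≫ g) ≫ inr := by rw [Category.assoc]
      _ = (g' ≫ γ) ≫ inr := by rw [sq2]
      _ = g' ≫ γ ≫ inr := by rw [Category.assoc]
  have hHPO : J.toPreJCat.IsHPO f' g' (β ≫ inl) (γ ≫ inr) := by
    refine J.cube hcomm (J.toPreJCat.isHPO_of_pushout hD hg)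
      (J.toPreJCat.isHPB_of_weq _ _ _ _ sq1 hα hβ)
      (J.toPreJCat.isHPB_of_weq _ _ _ _ sq2 hα hγ)
      (J.toPreJCat.isHPB_of_weq _ _ _ _ (Category.comp_id _) hβ (J.toPreJCat.weq_id' D))
      (J.toPreJCat.isHPB_of_weq _ _ _ _ (Category.comp_id _) hγ (J.toPreJCat.weq_id' D))
  obtain ⟨-, Z₁, i₁, σ₁, hi₁, hσ₁, hfac₁, Q₁, l₁, r₁, hQ₁, w₁, hw₁, hl₁, hr₁⟩ := hHPO
  obtain ⟨v, hv, hvl, hvr⟩ := J.toPreJCat.pushout_compare hD' hg' hi₁ hσ₁ hfac₁ hQ₁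
  set δ := hD'.desc (β ≫ inl) (γ ≫ inr) hcomm with hδdef
  have hvδ : v ≫ δ = w₁ := by
    apply hQ₁.hom_ext
    · rw [← Category.assoc, hvl, Category.assoc, hD'.inl_desc, hl₁]
    · rw [← Category.assoc, hvr, hD'.inr_desc, hr₁]
  refine ⟨δ, J.toPreJCat.weq_of_comp_right hv (by rw [hvδ]; exact hw₁),
    hD'.inl_desc _ _ _, hD'.inr_desc _ _ _⟩

end JCat

namespace JCat

/-- The join construction can be transported along a weak equivalence of
diagonals, keeping track of a common weakly equivalent model over the base. -/
lemma chain (J : JCat C)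
    {F F' Pd Pd' : C} {Δ : F ⟶ Pd} {Δ' : F' ⟶ Pd'} {h : F' ⟶ F} {H : Pd' ⟶ Pd}
    (hwh : J.toPreJCat.weq h) (hwH : J.toPreJCat.weq H) (nat : h ≫ Δ = Δ' ≫ H) :
    ∀ {m : ℕ} {X : C} {j : X ⟶ Pd}, J.toPreJCat.IsIterJoin Δ m j →
    ∃ (X' : C) (j' : X' ⟶ Pd'), J.toPreJCat.IsIterJoin Δ' m j' ∧
      ∃ (Y : C) (d : Y ⟶ Pd) (β : X ⟶ Y) (α : X' ⟶ Y),
        J.toPreJCat.weq β ∧ J.toPreJCat.weq α ∧ β ≫ d = j ∧ α ≫ d = j' ≫ H := by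
  intro m X j hiter
  induction hiter with
  | zero =>
    exact ⟨F', Δ', PreJCat.IsIterJoin.zero, F, Δ, 𝟙 F, h, J.toPreJCat.weq_id' F, hwh,
      Category.id_comp Δ, nat⟩
  | @succ n Xn Xp jn jp hprev hjoin ih =>
    obtain ⟨Xn', jn', hiter', Y, d, β, α, hβ, hα, hβd, hαd⟩ := ih
    obtain ⟨E, τ, q, hτ, hq, hτq, E₁, Z, fbar, pbar, i, σ, a, bz, hpb, hi, hσ, hiσ,
      hpo, haj, hbzj⟩ := hjoin
    -- fibrant replacement of Δ' over Pd' obtained by base change along H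
    obtain ⟨P, Hb, qP, hPpb, hqP⟩ := J.toPreJCat.pb_exists q H hq
    have hHb : J.toPreJCat.weq Hb := (J.toPreJCat.pb_weq hq hPpb).1 hwH
    have hliftτ' : (h ≫ τ) ≫ q = Δ' ≫ H := by rw [Category.assoc, hτq, nat]
    set τ' := hPpb.lift (h ≫ τ) Δ' hliftτ' with hτ'def
    have hτ'Hb : τ' ≫ Hb = h ≫ τ := hPpb.lift_fst _ _ _
    have hτ'qP : τ' ≫ qP = Δ' := hPpb.lift_snd _ _ _
    have hτ' : J.toPreJCat.weq τ' :=
      J.toPreJCat.weq_of_comp_left hHb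
        (by rw [hτ'Hb]; exact J.toPreJCat.weq_comp hwh hτ)
    -- the primed and Y-level pullbacks
    obtain ⟨E₁', fbar', pbar', hpb', _⟩ := J.toPreJCat.pb_exists qP jn' hqP
    obtain ⟨E₁Y, fbarY, pbarY, hpbY, hfibpbarY⟩ := J.toPreJCat.pb_exists q d hq
    -- comparison of the given pullback with the Y-level one
    have hwεβ : fbar ≫ q = (pbar ≫ β) ≫ d := by
      rw [hpb.w, Category.assoc, hβd]
    set εβ := hpbY.lift fbar (pbar ≫ β) hwεβ with hεβdef
    have hεβf : εβ ≫ fbarY = fbar := hpbY.lift_fst _ _ _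
    have hεβp : εβ ≫ pbarY = pbar ≫ β := hpbY.lift_snd _ _ _
    have hsq5 : IsPullback εβ pbar pbarY β := by
      refine IsPullback.of_right ?_ hεβp hpbY
      rw [hεβf, hβd]; exact hpb
    have hεβ : J.toPreJCat.weq εβ := (J.toPreJCat.pb_weq hfibpbarY hsq5).1 hβ
    -- comparison of the primed pullback with the Y-level one
    have hbig6 : IsPullback (fbar' ≫ Hb) pbar' q (jn' ≫ H) := hpb'.paste_horiz hPpb
    have hwεα : (fbar' ≫ Hb) ≫ q = (pbar' ≫ α) ≫ d := by
      rw [hbig6.w, Category.assoc, hαd]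
    set εα := hpbY.lift (fbar' ≫ Hb) (pbar' ≫ α) hwεα with hεαdef
    have hεαf : εα ≫ fbarY = fbar' ≫ Hb := hpbY.lift_fst _ _ _
    have hεαp : εα ≫ pbarY = pbar' ≫ α := hpbY.lift_snd _ _ _
    have hsq6 : IsPullback εα pbar' pbarY α := by
      refine IsPullback.of_right ?_ hεαp hpbY
      rw [hεαf, hαd]; exact hbig6
    have hεα : J.toPreJCat.weq εα := (J.toPreJCat.pb_weq hfibpbarY hsq6).1 hα
    -- pushforward of the given C-factorization
    obtain ⟨SZ, ζ, iY1, hpoSZ, hcofibiY1⟩ := J.toPreJCat.po_exists i εβ hi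
    have hζ : J.toPreJCat.weq ζ := (J.toPreJCat.po_weq hi hpoSZ).1 hεβ
    have hwσY1 : i ≫ σ = εβ ≫ fbarY := by rw [hiσ, ← hεβf]
    set σY1 := hpoSZ.desc σ fbarY hwσY1 with hσY1def
    have hζσ : ζ ≫ σY1 = σ := hpoSZ.inl_desc _ _ _
    have hiY1σ : iY1 ≫ σY1 = fbarY := hpoSZ.inr_desc _ _ _
    have hσY1 : J.toPreJCat.weq σY1 :=
      J.toPreJCat.weq_of_comp_right hζ (by rw [hζσ]; exact hσ)
    -- primed C-factorization and its pushforward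
    obtain ⟨Z', i', σ'₀, hi', hσ'₀, hiσ'⟩ := J.toPreJCat.C_fac fbar'
    obtain ⟨SZ', ζ', iY2, hpoSZ', hcofibiY2⟩ := J.toPreJCat.po_exists i' εα hi'
    have hζ' : J.toPreJCat.weq ζ' := (J.toPreJCat.po_weq hi' hpoSZ').1 hεα
    have hwσY2 : i' ≫ σ'₀ ≫ Hb = εα ≫ fbarY := by
      rw [← Category.assoc, hiσ', ← hεαf]
    set σY2 := hpoSZ'.desc (σ'₀ ≫ Hb) fbarY hwσY2 with hσY2def
    have hζ'σ : ζ' ≫ σY2 = σ'₀ ≫ Hb := hpoSZ'.inl_desc _ _ _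
    have hiY2σ : iY2 ≫ σY2 = fbarY := hpoSZ'.inr_desc _ _ _
    have hσY2 : J.toPreJCat.weq σY2 :=
      J.toPreJCat.weq_of_comp_right hζ'
        (by rw [hζ'σ]; exact J.toPreJCat.weq_comp hσ'₀ hHb)
    -- common refinement of the two pushforwards
    obtain ⟨S, v1, v2, hpoS, hcofibv2⟩ := J.toPreJCat.po_exists iY1 iY2 hcofibiY1
    have hwσS : iY1 ≫ σY1 = iY2 ≫ σY2 := by rw [hiY1σ, hiY2σ]
    set σS := hpoS.desc σY1 σY2 hwσS with hσSdef
    have hv1σ : v1 ≫ σS = σY1 := hpoS.inl_desc _ _ _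
    have hv2σ : v2 ≫ σS = σY2 := hpoS.inr_desc _ _ _
    obtain ⟨V, c, σV, hccofib, hσV, hcσV⟩ := J.toPreJCat.C_fac σS
    have hc1σ : (v1 ≫ c) ≫ σV = σY1 := by rw [Category.assoc, hcσV, hv1σ]
    have hc2σ : (v2 ≫ c) ≫ σV = σY2 := by rw [Category.assoc, hcσV, hv2σ]
    have hc1 : J.toPreJCat.weq (v1 ≫ c) :=
      J.toPreJCat.weq_of_comp_left hσV (by rw [hc1σ]; exact hσY1)
    have hc2 : J.toPreJCat.weq (v2 ≫ c) :=
      J.toPreJCat.weq_of_comp_left hσV (by rw [hc2σ]; exact hσY2)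
    set iV := iY2 ≫ v2 ≫ c with hiVdef
    have hiVcofib : J.toPreJCat.cofib iV :=
      J.toPreJCat.cofib_comp hcofibiY2 (J.toPreJCat.cofib_comp hcofibv2 hccofib)
    have hiValt : iY1 ≫ (v1 ≫ c) = iV := by
      rw [hiVdef, ← Category.assoc, ← Category.assoc, hpoS.w]
    have hiVσV : iV ≫ σV = fbarY := by
      rw [← hiValt, Category.assoc, hc1σ, hiY1σ]
    -- the Y-level pushout
    obtain ⟨QV, bV, aV, hpoQV0, _⟩ := J.toPreJCat.po_exists iV pbarY hiVcofib
    have hpoQV : IsPushout pbarY iV aV bV := hpoQV0.flip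
    have hwdV : pbarY ≫ d = iV ≫ σV ≫ q := by
      rw [← hpbY.w, ← Category.assoc, hiVσV]
    set dV := hpoQV.desc d (σV ≫ q) hwdV with hdVdef
    have haVd : aV ≫ dV = d := hpoQV.inl_desc _ _ _
    have hbVd : bV ≫ dV = σV ≫ q := hpoQV.inr_desc _ _ _
    -- glue on the unprimed side
    have hsq2β : i ≫ ζ ≫ v1 ≫ c = εβ ≫ iV := by
      rw [← Category.assoc, hpoSZ.w, Category.assoc, hiValt]
    obtain ⟨βp, hβpweq, haβp, hbzβp⟩ :=
      J.glue hpoQV hiVcofib hpo hi hεβ hβ (J.toPreJCat.weq_comp hζ hc1) hεβp.symm hsq2β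
    have hβpd : βp ≫ dV = jp := by
      apply hpo.hom_ext
      · rw [← Category.assoc, haβp, Category.assoc, haVd, hβd, haj]
      · rw [← Category.assoc, hbzβp, Category.assoc, hbVd, hbzj,
          ← Category.assoc, Category.assoc ζ (v1 ≫ c) σV, hc1σ, hζσ]
    -- the primed pushout and join
    obtain ⟨Jo', bz', a', hpoJo'0, _⟩ := J.toPreJCat.po_exists i' pbar' hi'
    have hpoJo' : IsPushout pbar' i' a' bz' := hpoJo'0.flip
    have hwj' : pbar' ≫ jn' = i' ≫ σ'₀ ≫ qP := by
      rw [← hpb'.w, ← Category.assoc, hiσ']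
    set j'p := hpoJo'.desc jn' (σ'₀ ≫ qP) hwj' with hj'def
    have haj' : a' ≫ j'p = jn' := hpoJo'.inl_desc _ _ _
    have hbzj' : bz' ≫ j'p = σ'₀ ≫ qP := hpoJo'.inr_desc _ _ _
    have hJoin' : J.toPreJCat.IsJoin jn' Δ' j'p :=
      ⟨P, τ', qP, hτ', hqP, hτ'qP, E₁', Z', fbar', pbar', i', σ'₀, a', bz',
        hpb', hi', hσ'₀, hiσ', hpoJo', haj', hbzj'⟩
    -- glue on the primed side
    have hsq2α : i' ≫ ζ' ≫ v2 ≫ c = εα ≫ iV := by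
      rw [← Category.assoc, hpoSZ'.w, Category.assoc, hiVdef]
    obtain ⟨αp, hαpweq, haαp, hbzαp⟩ :=
      J.glue hpoQV hiVcofib hpoJo' hi' hεα hα (J.toPreJCat.weq_comp hζ' hc2) hεαp.symm hsq2α
    have hαpd : αp ≫ dV = j'p ≫ H := by
      apply hpoJo'.hom_ext
      · rw [← Category.assoc, haαp, Category.assoc, haVd, hαd, ← Category.assoc, haj']
      · rw [← Category.assoc, hbzαp, Category.assoc, hbVd,
          ← Category.assoc, Category.assoc ζ' (v2 ≫ c) σV, hc2σ, hζ'σ,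
          ← Category.assoc, hbzj', Category.assoc, Category.assoc, hPpb.w]
    exact ⟨Jo', j'p, PreJCat.IsIterJoin.succ hiter' hJoin', QV, dV, βp, αp,
      hβpweq, hαpweq, hβpd, hαpd⟩

end JCat

namespace JCat

lemma Gsecat_le (J : JCat C) (hc : ∀ X : C, J.toPreJCat.CofModel X)
    {F F' Pd Pd' : C} {Δ : F ⟶ Pd} {Δ' : F' ⟶ Pd'} {h : F' ⟶ F} {H : Pd' ⟶ Pd}
    (hwh : J.toPreJCat.weq h) (hwH : J.toPreJCat.weq H) (nat : h ≫ Δ = Δ' ≫ H) :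
    J.toPreJCat.Gsecat Δ' ≤ J.toPreJCat.Gsecat Δ := by
  unfold PreJCat.Gsecat
  apply sInf_le_sInf
  rintro n ⟨m, rfl, X, j, hiter, hsec⟩
  obtain ⟨X', j', hiter', Y, d, β, α, hβ, hα, hβd, hαd⟩ := J.chain hwh hwH nat hiter
  exact ⟨m, rfl, X', j', hiter',
    J.toPreJCat.hasWeakSection_of_square hα hwH hαd
      (J.toPreJCat.hasWeakSection_of_comp hc hβ hβd hsec)⟩

lemma weq_prod_map (J : JCat C) {F F' Pd Pd' : C} (hF : J.toPreJCat.EFibrant F)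
    (hF' : J.toPreJCat.EFibrant F') {p1 p2 : Pd ⟶ F} {p1' p2' : Pd' ⟶ F'}
    (hP : IsBinProd p1 p2) (hP' : IsBinProd p1' p2') {h : F' ⟶ F}
    (hwh : J.toPreJCat.weq h)
    {H : Pd' ⟶ Pd} (hH1 : H ≫ p1 = p1' ≫ h) (hH2 : H ≫ p2 = p2' ≫ h) :
    J.toPreJCat.weq H := by
  obtain ⟨P0, π1, π2, hP0, hfibπ2⟩ := J.toPreJCat.pb_exists (0 : F ⟶ 0) (0 : F ⟶ 0) hF
  obtain ⟨P0', π1', π2', hP0', hfibπ2'⟩ :=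
    J.toPreJCat.pb_exists (0 : F' ⟶ 0) (0 : F' ⟶ 0) hF'
  obtain ⟨M, fbM, pbM, hM, hfibpbM⟩ := J.toPreJCat.pb_exists (0 : F' ⟶ 0) (0 : F ⟶ 0) hF'
  set c₁ := hM.lift π2' (π1' ≫ h) ((Limits.isZero_zero C).eq_of_tgt _ _) with hc₁def
  have hc₁f : c₁ ≫ fbM = π2' := hM.lift_fst _ _ _
  have hc₁p : c₁ ≫ pbM = π1' ≫ h := hM.lift_snd _ _ _
  have hc₁sq : IsPullback c₁ π1' pbM h := by
    refine IsPullback.of_right ?_ hc₁p hM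
    rw [hc₁f]
    have hz : h ≫ (0 : F ⟶ 0) = (0 : F' ⟶ 0) := (Limits.isZero_zero C).eq_of_tgt _ _
    rw [hz]
    exact hP0'.flip
  have hc₁ : J.toPreJCat.weq c₁ := (J.toPreJCat.pb_weq hfibpbM hc₁sq).1 hwh
  set c₂ := hP0.lift pbM (fbM ≫ h) ((Limits.isZero_zero C).eq_of_tgt _ _) with hc₂def
  have hc₂f : c₂ ≫ π1 = pbM := hP0.lift_fst _ _ _
  have hc₂s : c₂ ≫ π2 = fbM ≫ h := hP0.lift_snd _ _ _
  have hc₂sq : IsPullback c₂ fbM π2 h := by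
    refine IsPullback.of_right ?_ hc₂s hP0
    rw [hc₂f]
    have hz : h ≫ (0 : F ⟶ 0) = (0 : F' ⟶ 0) := (Limits.isZero_zero C).eq_of_tgt _ _
    rw [hz]
    exact hM.flip
  have hc₂ : J.toPreJCat.weq c₂ := (J.toPreJCat.pb_weq hfibπ2 hc₂sq).1 hwh
  obtain ⟨L⟩ := hP
  obtain ⟨L'⟩ := hP'
  obtain ⟨L0⟩ := PreJCat.isBinProd_of_isPullback_zero hP0
  obtain ⟨L0'⟩ := PreJCat.isBinProd_of_isPullback_zero hP0'
  set e' : Pd' ≅ P0' := L'.conePointUniqueUpToIso L0' with he'def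
  set e : P0 ≅ Pd := L0.conePointUniqueUpToIso L with hedef
  have he'1 : e'.hom ≫ π1' = p1' :=
    L'.conePointUniqueUpToIso_hom_comp L0' ⟨WalkingPair.left⟩
  have he'2 : e'.hom ≫ π2' = p2' :=
    L'.conePointUniqueUpToIso_hom_comp L0' ⟨WalkingPair.right⟩
  have he1 : e.hom ≫ p1 = π1 :=
    L0.conePointUniqueUpToIso_hom_comp L ⟨WalkingPair.left⟩
  have he2 : e.hom ≫ p2 = π2 :=
    L0.conePointUniqueUpToIso_hom_comp L ⟨WalkingPair.right⟩
  have hHeq : H = e'.hom ≫ (c₁ ≫ c₂) ≫ e.hom := by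
    apply BinaryFan.IsLimit.hom_ext L
    · show H ≫ p1 = (e'.hom ≫ (c₁ ≫ c₂) ≫ e.hom) ≫ p1
      calc H ≫ p1 = p1' ≫ h := hH1
        _ = (e'.hom ≫ π1') ≫ h := by rw [he'1]
        _ = e'.hom ≫ (c₁ ≫ pbM) := by rw [Category.assoc, hc₁p]
        _ = e'.hom ≫ (c₁ ≫ (c₂ ≫ π1)) := by rw [hc₂f]
        _ = e'.hom ≫ (c₁ ≫ (c₂ ≫ (e.hom ≫ p1))) := by rw [he1]
        _ = (e'.hom ≫ (c₁ ≫ c₂) ≫ e.hom) ≫ p1 := by simp only [Category.assoc]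
    · show H ≫ p2 = (e'.hom ≫ (c₁ ≫ c₂) ≫ e.hom) ≫ p2
      calc H ≫ p2 = p2' ≫ h := hH2
        _ = (e'.hom ≫ π2') ≫ h := by rw [he'2]
        _ = e'.hom ≫ ((c₁ ≫ fbM) ≫ h) := by rw [hc₁f, Category.assoc]
        _ = e'.hom ≫ (c₁ ≫ (fbM ≫ h)) := by rw [Category.assoc]
        _ = e'.hom ≫ (c₁ ≫ (c₂ ≫ π2)) := by rw [hc₂s]
        _ = e'.hom ≫ (c₁ ≫ (c₂ ≫ (e.hom ≫ p2))) := by rw [he2]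
        _ = (e'.hom ≫ (c₁ ≫ c₂) ≫ e.hom) ≫ p2 := by simp only [Category.assoc]
  rw [hHeq]
  exact J.toPreJCat.weq_comp (J.toPreJCat.weq_of_isIso e'.hom)
    (J.toPreJCat.weq_comp (J.toPreJCat.weq_comp hc₁ hc₂)
      (J.toPreJCat.weq_of_isIso e.hom))

lemma TCE_le (J : JCat C) (hc : ∀ X : C, J.toPreJCat.CofModel X) {F F' : C}
    (hF : J.toPreJCat.EFibrant F) (hF' : J.toPreJCat.EFibrant F')
    {h : F' ⟶ F} (hwh : J.toPreJCat.weq h) :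
    J.toPreJCat.TCE F' ≤ J.toPreJCat.TCE F := by
  unfold PreJCat.TCE
  apply le_iInf; intro Pd
  apply le_iInf; intro p1
  apply le_iInf; intro p2
  apply le_iInf; intro hP
  apply le_iInf; intro Δ
  apply le_iInf; intro hΔ
  obtain ⟨Pd', π1', π2', hP0', hfib2'⟩ :=
    J.toPreJCat.pb_exists (0 : F' ⟶ 0) (0 : F' ⟶ 0) hF'
  have hbp' : IsBinProd π1' π2' := PreJCat.isBinProd_of_isPullback_zero hP0'
  set Δ' := hP0'.lift (𝟙 F') (𝟙 F') ((Limits.isZero_zero C).eq_of_tgt _ _) with hΔ'def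
  have hΔ'1 : Δ' ≫ π1' = 𝟙 F' := hP0'.lift_fst _ _ _
  have hΔ'2 : Δ' ≫ π2' = 𝟙 F' := hP0'.lift_snd _ _ _
  obtain ⟨L⟩ := hP
  obtain ⟨H, hH1, hH2⟩ := BinaryFan.IsLimit.lift' L (π1' ≫ h) (π2' ≫ h)
  have hH1' : H ≫ p1 = π1' ≫ h := hH1
  have hH2' : H ≫ p2 = π2' ≫ h := hH2
  have hwH : J.toPreJCat.weq H :=
    J.weq_prod_map hF hF' ⟨L⟩ hbp' hwh hH1' hH2'
  have nat : h ≫ Δ = Δ' ≫ H := by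
    apply BinaryFan.IsLimit.hom_ext L
    · show (h ≫ Δ) ≫ p1 = (Δ' ≫ H) ≫ p1
      rw [Category.assoc, hΔ.1, Category.comp_id, Category.assoc, hH1',
        ← Category.assoc, hΔ'1, Category.id_comp]
    · show (h ≫ Δ) ≫ p2 = (Δ' ≫ H) ≫ p2
      rw [Category.assoc, hΔ.2, Category.comp_id, Category.assoc, hH2',
        ← Category.assoc, hΔ'2, Category.id_comp]
  refine le_trans ?_ (J.Gsecat_le hc hwh hwH nat)
  refine iInf_le_of_le Pd' ?_
  refine iInf_le_of_le π1' ?_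
  refine iInf_le_of_le π2' ?_
  refine iInf_le_of_le hbp' ?_
  refine iInf_le_of_le Δ' ?_
  exact iInf_le _ ⟨hΔ'1, hΔ'2⟩

lemma exists_comparison (J : JCat C) (hc : ∀ X : C, J.toPreJCat.CofModel X)
    {B F F' : C} (τ : B ⟶ F) (τ' : B ⟶ F') (hτ : J.toPreJCat.weq τ)
    (hF : J.toPreJCat.EFibrant F) (hτ' : J.toPreJCat.weq τ')
    (hF' : J.toPreJCat.EFibrant F') :
    ∃ h : F' ⟶ F, J.toPreJCat.weq h := by
  obtain ⟨K, k1, k2, hK, hfibk2⟩ := J.toPreJCat.pb_exists (0 : F ⟶ 0) (0 : F' ⟶ 0) hF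
  obtain ⟨N, w, r, hw, hr, hwr⟩ :=
    J.toPreJCat.F_fac (hK.lift τ τ' ((Limits.isZero_zero C).eq_of_tgt _ _))
  have h1 : J.toPreJCat.fib (r ≫ k2) := J.toPreJCat.fib_comp hr hfibk2
  have h2 : J.toPreJCat.weq (r ≫ k2) :=
    J.toPreJCat.weq_of_comp_right hw
      (by rw [← Category.assoc, hwr, hK.lift_snd]; exact hτ')
  obtain ⟨s, hs⟩ := hc F' (r ≫ k2) h1 h2
  refine ⟨s ≫ r ≫ k1, ?_⟩
  have hrk1 : J.toPreJCat.weq (r ≫ k1) :=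
    J.toPreJCat.weq_of_comp_right hw
      (by rw [← Category.assoc, hwr, hK.lift_fst]; exact hτ)
  have hsw : J.toPreJCat.weq s :=
    J.toPreJCat.weq_of_comp_left h2 (by rw [hs]; exact J.toPreJCat.weq_id' F')
  exact J.toPreJCat.weq_comp hsw hrk1

lemma TCE_eq (J : JCat C) (hc : ∀ X : C, J.toPreJCat.CofModel X)
    {B F F' : C} (τ : B ⟶ F) (τ' : B ⟶ F') (hτ : J.toPreJCat.weq τ)
    (hF : J.toPreJCat.EFibrant F) (hτ' : J.toPreJCat.weq τ')
    (hF' : J.toPreJCat.EFibrant F') :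
    J.toPreJCat.TCE F = J.toPreJCat.TCE F' := by
  obtain ⟨h, hwh⟩ := J.exists_comparison hc τ τ' hτ hF hτ' hF'
  obtain ⟨h₂, hwh₂⟩ := J.exists_comparison hc τ' τ hτ' hF' hτ hF
  exact le_antisymm (J.TCE_le hc hF' hF hwh₂) (J.TCE_le hc hF hF' hwh)

lemma TC_eq_TCE (J : JCat C) (hc : ∀ X : C, J.toPreJCat.CofModel X)
    {B F₀ : C} (τ₀ : B ⟶ F₀) (hτ₀ : J.toPreJCat.weq τ₀)
    (hF₀ : J.toPreJCat.EFibrant F₀) :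
    J.toPreJCat.TC B = J.toPreJCat.TCE F₀ := by
  apply le_antisymm
  · unfold PreJCat.TC
    exact iInf_le_of_le F₀ (iInf_le_of_le τ₀ (iInf_le _ ⟨hτ₀, hF₀⟩))
  · unfold PreJCat.TC
    apply le_iInf; intro F
    apply le_iInf; intro τ
    apply le_iInf; intro hτF
    exact le_of_eq (J.TCE_eq hc τ₀ τ hτ₀ hF₀ hτF.1 hτF.2)

end JCat
/-- The abstract topological complexity is well-defined:
it does not depend on the choice of e-fibrant replacement, and it is invariant
under weak equivalence of objects. -/
theorem TC_well_defined (J : JCat C)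
    (hc : ∀ X : C, J.toPreJCat.CofModel X) :
    (∀ (B F F' : C) (τ : B ⟶ F) (τ' : B ⟶ F'),
      J.toPreJCat.weq τ → J.toPreJCat.EFibrant F →
      J.toPreJCat.weq τ' → J.toPreJCat.EFibrant F' →
      J.toPreJCat.TCE F = J.toPreJCat.TCE F') ∧
    (∀ B B' : C, J.toPreJCat.WeaklyEquivObj B B' →
      J.toPreJCat.TC B = J.toPreJCat.TC B') := by
  constructor
  · intro B F F' τ τ' hτ hF hτ' hF'
    exact J.TCE_eq hc τ τ' hτ hF hτ' hF'
  · intro B B' hBB'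
    induction hBB' with
    | rel x y hxy =>
      obtain ⟨f, hf⟩ := hxy
      obtain ⟨F', τ', q', hτ', hq', hfac⟩ := J.toPreJCat.F_fac (0 : y ⟶ 0)
      have hF' : J.toPreJCat.EFibrant F' := by
        unfold PreJCat.EFibrant
        have hz : q' = (0 : F' ⟶ 0) := (Limits.isZero_zero C).eq_of_tgt _ _
        rw [← hz]
        exact hq'
      rw [J.TC_eq_TCE hc (f ≫ τ') (J.toPreJCat.weq_comp hf hτ') hF',
        J.TC_eq_TCE hc τ' hτ' hF']
    | refl x => rfl
    | symm x y _ ih => exact ih.symm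
    | trans x y z _ _ ih1 ih2 => exact ih1.trans ih2
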